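/- arXiv:1807.00520 — 2 statements merged into one kernel-verified Lean document; each statement's English description precedes it below -/
import Mathlib

section
/- Let g(x) = x₁·x₂·⋯·x_d, expressed on the unit sphere in the spherical coordinates v₁ = cos φ₁, v₂ = sin φ₁ cos φ₂, …, v_{d−1} = sin φ₁ ⋯ sin φ_{d−2} cos φ_{d−1}, v_d = sin φ₁ ⋯ sin φ_{d−2} sin φ_{d−1}, so that g(φ) = sin^{d−1}φ₁ ⋯ sin φ_{d−1} · cos φ₁ ⋯ cos φ_{d−1}. Then at every maximizing angle φ of g(φ) (i.e. with g(φ) = d^{−d/2}) the Hessian satisfies ∂²g/∂φ_i² (φ) = −2(d−i+1)/d^{d/2} for i = 1,…,d−1 and ∂²g/∂φ_i∂φ_j (φ) = 0 for i ≠ j, so that |det g''(φ)| = 2^{d−1} · d! / d^{d(d−1)/2} > 0. -/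
open Real Set

noncomputable section

/-- The Hessian matrix `[∂²G/∂φ_i∂φ_j]` of a function of the angular variables,
with second derivatives expressed via iterated Fréchet derivatives in the coordinate
directions. -/
def angularHessian {n : ℕ} (G : (Fin n → ℝ) → ℝ) (φ : Fin n → ℝ) :
    Matrix (Fin n) (Fin n) ℝ :=
  Matrix.of fun i j => fderiv ℝ (fun y => fderiv ℝ G y (Pi.single j 1)) φ (Pi.single i 1)

/-! ### Auxiliary single-variable functions -/

def Faux (k : ℕ) (t : ℝ) : ℝ := Real.sin t ^ k * Real.cos t
def F1aux (k : ℕ) (t : ℝ) : ℝ := k * Real.sin t ^ (k-1) - (k+1) * Real.sin t ^ (k+1)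
def F2aux (k : ℕ) (t : ℝ) : ℝ :=
  (k:ℝ) * (((k-1 : ℕ):ℝ) * Real.sin t ^ (k-2) * Real.cos t)
    - ((k:ℝ)+1) * (((k+1:ℕ):ℝ) * Real.sin t ^ k * Real.cos t)
def caux (k : ℕ) : ℝ := ((k:ℝ)/((k:ℝ)+1))^k * (1 - (k:ℝ)/((k:ℝ)+1))

lemma coeff_pow (k : ℕ) (x c : ℝ) : (k:ℝ) * x^(k-1) * (x^2 * c) = (k:ℝ) * x^(k+1) * c := by
  cases k with
  | zero => simp
  | succ m =>
    rw [Nat.succ_sub_one, show m+1+1 = m+2 by omega, pow_add]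
    ring

lemma hasDerivAt_F (k : ℕ) (t : ℝ) : HasDerivAt (Faux k) (F1aux k t) t := by
  have h := ((Real.hasDerivAt_sin t).pow k).mul (Real.hasDerivAt_cos t)
  refine h.congr_deriv (Eq.symm ?_)
  have hc : Real.cos t ^ 2 = 1 - Real.sin t ^ 2 := by
    nlinarith [Real.sin_sq_add_cos_sq t]
  have h2 := coeff_pow k (Real.sin t) 1
  unfold F1aux
  simp only [Pi.pow_apply]
  linear_combination (-(k:ℝ) * Real.sin t ^ (k-1)) * hc + h2

lemma hasDerivAt_F1 (k : ℕ) (t : ℝ) : HasDerivAt (F1aux k) (F2aux k t) t := by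
  have h := (((Real.hasDerivAt_sin t).pow (k-1)).const_mul (k:ℝ)).sub
    (((Real.hasDerivAt_sin t).pow (k+1)).const_mul ((k:ℝ)+1))
  exact h.congr_deriv (Eq.symm rfl)

lemma F1_zero (k : ℕ) (hk : 1 ≤ k) (t : ℝ) (hs : Real.sin t ^ 2 = k/((k:ℝ)+1)) :
    F1aux k t = 0 := by
  have hsk : Real.sin t ^ (k+1) = Real.sin t ^ (k-1) * Real.sin t ^ 2 := by
    rw [← pow_add]; congr 1; omega
  unfold F1aux
  rw [hsk, hs]
  have : ((k:ℝ)+1) ≠ 0 := by positivity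
  field_simp
  ring

lemma F2_eq (k : ℕ) (hk : 1 ≤ k) (t : ℝ) (hs : Real.sin t ^ 2 = k/((k:ℝ)+1)) :
    F2aux k t = -2 * ((k:ℝ)+1) * Faux k t := by
  have hne : ((k:ℝ)+1) ≠ 0 := by positivity
  unfold F2aux Faux
  rcases Nat.lt_or_ge k 2 with h2 | h2
  · interval_cases k
    push_cast
    ring
  · have hsk : Real.sin t ^ k = Real.sin t ^ (k-2) * Real.sin t ^ 2 := by
      rw [← pow_add]; congr 1; omega
    rw [hsk, hs]
    have hk1 : ((k-1:ℕ):ℝ) = (k:ℝ) - 1 := by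
      have : (1:ℕ) ≤ k := hk; push_cast [Nat.cast_sub this]; ring
    rw [hk1]
    push_cast
    field_simp
    ring

lemma prod_max_lt (k : ℕ) (hk : 1 ≤ k) {s : ℝ} (h0 : 0 ≤ s) (h1 : s ≤ 1)
    (hne : s ≠ (k:ℝ)/((k:ℝ)+1)) :
    s^k * (1-s) < caux k := by
  unfold caux
  set c : ℝ := (k:ℝ)/((k:ℝ)+1) with hc
  have hkpos : (0:ℝ) < k := by exact_mod_cast hk
  have hk1 : (0:ℝ) < (k:ℝ)+1 := by positivity
  have hc0 : 0 < c := by positivity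
  have hc1 : c < 1 := by rw [hc, div_lt_one hk1]; linarith
  set h : ℝ → ℝ := fun s => s^k - s^(k+1) with hh
  have hderiv : ∀ x : ℝ, HasDerivAt h ((k:ℝ)*x^(k-1) - ((k:ℝ)+1)*x^k) x := by
    intro x
    have := (hasDerivAt_pow k x).sub (hasDerivAt_pow (k+1) x)
    refine this.congr_deriv (Eq.symm ?_)
    push_cast [show k+1-1 = k by omega]
    ring
  have hcont : Continuous h := by fun_prop
  have key : ∀ x : ℝ, 0 < x →
      ((k:ℝ)*x^(k-1) - ((k:ℝ)+1)*x^k) = x^(k-1) * ((k:ℝ) - ((k:ℝ)+1)*x) := by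
    intro x hx
    have : x^k = x^(k-1) * x := by rw [← pow_succ]; congr 1; omega
    rw [this]; ring
  have hmono : StrictMonoOn h (Icc 0 c) := by
    apply strictMonoOn_of_deriv_pos (convex_Icc 0 c) hcont.continuousOn
    intro x hx
    rw [interior_Icc] at hx
    rw [(hderiv x).deriv, key x hx.1]
    have h1 : (0:ℝ) < x^(k-1) := pow_pos hx.1 _
    have h2 : ((k:ℝ)+1)*x < k := by
      have := hx.2
      rw [hc, lt_div_iff₀ hk1] at this
      linarith
    nlinarith
  have hanti : StrictAntiOn h (Icc c 1) := by
    apply strictAntiOn_of_deriv_neg (convex_Icc c 1) hcont.continuousOn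
    intro x hx
    rw [interior_Icc] at hx
    have hx0 : 0 < x := lt_trans hc0 hx.1
    rw [(hderiv x).deriv, key x hx0]
    have h1 : (0:ℝ) < x^(k-1) := pow_pos hx0 _
    have h2 : (k:ℝ) < ((k:ℝ)+1)*x := by
      have := hx.1
      rw [hc, div_lt_iff₀ hk1] at this
      linarith
    nlinarith
  have hlt : h s < h c := by
    rcases lt_or_gt_of_ne hne with hlt | hgt
    · exact hmono ⟨h0, hlt.le⟩ ⟨hc0.le, le_refl c⟩ hlt
    · exact hanti ⟨le_refl c, hc1.le⟩ ⟨hgt.le, h1⟩ hgt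
  calc s^k * (1-s) = h s := by rw [hh]; ring
    _ < h c := hlt
    _ = c^k * (1-c) := by rw [hh]; ring

lemma Faux_sq (k : ℕ) (t : ℝ) :
    (Faux k t)^2 = (Real.sin t ^ 2)^k * (1 - Real.sin t ^ 2) := by
  have hc : Real.cos t ^ 2 = 1 - Real.sin t ^ 2 := by
    nlinarith [Real.sin_sq_add_cos_sq t]
  unfold Faux
  rw [mul_pow, ← pow_mul, ← pow_mul, hc, Nat.mul_comm]

lemma Faux_sq_le (k : ℕ) (hk : 1 ≤ k) (t : ℝ) : (Faux k t)^2 ≤ caux k := by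
  rw [Faux_sq]
  set s := Real.sin t ^ 2 with hs
  have h0 : 0 ≤ s := sq_nonneg _
  have h1 : s ≤ 1 := by
    rw [hs]; nlinarith [Real.sin_sq_add_cos_sq t, sq_nonneg (Real.cos t)]
  by_cases hc : s = (k:ℝ)/((k:ℝ)+1)
  · rw [hc]; unfold caux; exact le_rfl
  · exact (prod_max_lt k hk h0 h1 hc).le

lemma fderiv_prod {n : ℕ} (p p' : Fin n → ℝ → ℝ)
    (hp : ∀ l t, HasDerivAt (p l) (p' l t) t) (y : Fin n → ℝ) (j : Fin n) :
    fderiv ℝ (fun z => ∏ l, p l (z l)) y (Pi.single j 1)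
      = (∏ m ∈ Finset.univ.erase j, p m (y m)) * p' j (y j) := by
  have hfact : ∀ l : Fin n, HasFDerivAt (fun z : Fin n → ℝ => p l (z l))
      ((p' l (y l)) • (ContinuousLinearMap.proj l : (Fin n → ℝ) →L[ℝ] ℝ)) y := by
    intro l
    have hproj : HasFDerivAt (fun z : Fin n → ℝ => z l)
        (ContinuousLinearMap.proj l : (Fin n → ℝ) →L[ℝ] ℝ) y :=
      (ContinuousLinearMap.proj l : (Fin n → ℝ) →L[ℝ] ℝ).hasFDerivAt
    exact (hp l (y l)).comp_hasFDerivAt y hproj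
  have hG := HasFDerivAt.finset_prod (u := Finset.univ) (fun l _ => hfact l)
  rw [hG.fderiv]
  rw [ContinuousLinearMap.sum_apply]
  rw [Finset.sum_eq_single j]
  · simp
  · intro l _ hlj
    simp [Pi.single_apply, hlj, Ne.symm hlj]
  · simp

lemma telescope (u : ℕ → ℝ) (hu : ∀ m, u m ≠ 0) :
    ∀ n, ∏ k ∈ Finset.range n, u k / u (k+1) = u 0 / u n := by
  intro n
  induction n with
  | zero => simp [div_self (hu 0)]
  | succ m ih =>
    rw [Finset.prod_range_succ, ih, div_mul_div_comm, mul_comm (u 0) (u m),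
      mul_div_mul_left _ _ (hu m)]

lemma caux_succ (j : ℕ) : caux (j+1) = (((j:ℝ)+1)^(j+1)) / (((j:ℝ)+2)^(j+2)) := by
  unfold caux
  have h2 : ((j:ℝ)+2) ≠ 0 := by positivity
  push_cast
  rw [div_pow]
  have e1 : (j:ℝ) + 1 + 1 = (j:ℝ) + 2 := by ring
  rw [e1]
  field_simp
  ring

lemma prod_caux (d : ℕ) (hd : 1 ≤ d) :
    ∏ l : Fin (d-1), caux (d-1-(l:ℕ)) = 1/(d:ℝ)^d := by
  set n := d - 1 with hn
  have hdn : d = n + 1 := by omega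
  rw [Fin.prod_univ_eq_prod_range (fun i => caux (n - i)) n]
  have step1 : ∏ i ∈ Finset.range n, caux (n - i) = ∏ i ∈ Finset.range n, caux (i+1) := by
    rw [← Finset.prod_range_reflect (fun j => caux (j+1)) n]
    apply Finset.prod_congr rfl
    intro i hi
    rw [Finset.mem_range] at hi
    congr 1
    omega
  rw [step1]
  have step2 : ∏ i ∈ Finset.range n, caux (i+1)
      = ∏ i ∈ Finset.range n, (fun m : ℕ => ((m:ℝ)+1)^(m+1)) i / (fun m : ℕ => ((m:ℝ)+1)^(m+1)) (i+1) := by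
    apply Finset.prod_congr rfl
    intro i _
    rw [caux_succ]
    push_cast
    ring_nf
  rw [step2, telescope (fun m : ℕ => ((m:ℝ)+1)^(m+1)) (by intro m; positivity) n]
  rw [hdn]
  push_cast
  norm_num

lemma prod_sub_factorial (d : ℕ) (hd : 1 ≤ d) :
    ∏ i : Fin (d-1), (d - (i:ℕ)) = Nat.factorial d := by
  rw [Fin.prod_univ_eq_prod_range (fun i => d - i) (d-1)]
  rw [← Nat.descFactorial_eq_prod_range]
  have : d = (d-1) + 1 := by omega
  calc d.descFactorial (d-1)
      = (d - (d-1)) * d.descFactorial (d-1) := by rw [show d - (d-1) = 1 by omega, one_mul]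
    _ = d.descFactorial ((d-1)+1) := (Nat.descFactorial_succ d (d-1)).symm
    _ = d.descFactorial d := by rw [← this]
    _ = Nat.factorial d := Nat.descFactorial_self d

end

/-- Example 2.1 ii), Hessian computation: for the product function in spherical
coordinates, `g(φ) = ∏_{i=1}^{d-1} sin^{d-i}(φ_i) cos(φ_i)` (here `i` is `0`-indexed, so
the exponent of `sin (φ i)` is `d - 1 - i`), at every maximizing angle `φ` (where
`g(φ) = d^{-d/2}`) one has `∂²g/∂φ_i² = -2(d-i+1)/d^{d/2}` (0-indexed: `-2(d-i)/d^{d/2}`),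
`∂²g/∂φ_i∂φ_j = 0` for `i ≠ j`, and `|det g''(φ)| = 2^{d-1} d! / d^{d(d-1)/2} > 0`. -/
theorem product_spherical_hessian (d : ℕ) (hd : 1 ≤ d)
    (G : (Fin (d - 1) → ℝ) → ℝ)
    (hG : ∀ φ, G φ = ∏ i : Fin (d - 1), Real.sin (φ i) ^ (d - 1 - (i : ℕ)) * Real.cos (φ i))
    (φ : Fin (d - 1) → ℝ) (hφ : G φ = (d : ℝ) ^ (-(d : ℝ) / 2)) :
    (∀ i : Fin (d - 1), angularHessian G φ i i =
        -2 * ((d : ℝ) - ((i : ℕ) : ℝ)) / (d : ℝ) ^ ((d : ℝ) / 2)) ∧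
    (∀ i j : Fin (d - 1), i ≠ j → angularHessian G φ i j = 0) ∧
    |(angularHessian G φ).det| =
      2 ^ (d - 1) * (Nat.factorial d : ℝ) / (d : ℝ) ^ ((d : ℝ) * ((d : ℝ) - 1) / 2) ∧
    (0 : ℝ) < 2 ^ (d - 1) * (Nat.factorial d : ℝ) / (d : ℝ) ^ ((d : ℝ) * ((d : ℝ) - 1) / 2) := by
  have hd0 : (0:ℝ) < d := by exact_mod_cast hd
  have hGfun : G = fun z => ∏ l : Fin (d-1), Faux (d-1-(l:ℕ)) (z l) := by
    funext z; rw [hG]; rfl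
  subst hGfun
  have hprod : ∏ l : Fin (d-1), Faux (d-1-(l:ℕ)) (φ l) = (d:ℝ)^(-(d:ℝ)/2) := hφ
  have hκ : ∀ l : Fin (d-1), 1 ≤ d-1-(l:ℕ) := by
    intro l; have := l.isLt; omega
  have hvpos : (0:ℝ) < (d:ℝ)^(-(d:ℝ)/2) := Real.rpow_pos_of_pos hd0 _
  have hne0 : ∀ l : Fin (d-1), Faux (d-1-(l:ℕ)) (φ l) ≠ 0 := by
    intro l
    have hpne : ∏ l : Fin (d-1), Faux (d-1-(l:ℕ)) (φ l) ≠ 0 := by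
      rw [hprod]; exact ne_of_gt hvpos
    exact Finset.prod_ne_zero_iff.mp hpne l (Finset.mem_univ l)
  -- product of squares equals product of maxima
  have hsqv : ((d:ℝ)^(-(d:ℝ)/2))^2 = 1/(d:ℝ)^d := by
    rw [← Real.rpow_natCast ((d:ℝ)^(-(d:ℝ)/2)) 2, ← Real.rpow_mul hd0.le]
    norm_num
  have hsqprod : ∏ l : Fin (d-1), (Faux (d-1-(l:ℕ)) (φ l))^2
      = ∏ l : Fin (d-1), caux (d-1-(l:ℕ)) := by
    rw [Finset.prod_pow, hprod, hsqv, prod_caux d hd]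
  -- each factor attains its max
  have hfac : ∀ l : Fin (d-1), (Faux (d-1-(l:ℕ)) (φ l))^2 = caux (d-1-(l:ℕ)) := by
    intro l
    by_contra hnee
    have hlt : (Faux (d-1-(l:ℕ)) (φ l))^2 < caux (d-1-(l:ℕ)) :=
      lt_of_le_of_ne (Faux_sq_le _ (hκ l) _) hnee
    have : ∏ l : Fin (d-1), (Faux (d-1-(l:ℕ)) (φ l))^2
        < ∏ l : Fin (d-1), caux (d-1-(l:ℕ)) := by
      apply Finset.prod_lt_prod
      · intro i _
        have := hne0 i
        positivity
      · exact fun i _ => Faux_sq_le _ (hκ i) _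
      · exact ⟨l, Finset.mem_univ l, hlt⟩
    exact (ne_of_lt this) hsqprod
  -- each sine squared value
  have hsin : ∀ l : Fin (d-1), Real.sin (φ l) ^ 2
      = ((d-1-(l:ℕ) : ℕ):ℝ)/((((d-1-(l:ℕ)) : ℕ):ℝ) + 1) := by
    intro l
    by_contra hnee
    have h0 : (0:ℝ) ≤ Real.sin (φ l)^2 := sq_nonneg _
    have h1 : Real.sin (φ l)^2 ≤ 1 := by
      nlinarith [Real.sin_sq_add_cos_sq (φ l), sq_nonneg (Real.cos (φ l))]
    have := prod_max_lt (d-1-(l:ℕ)) (hκ l) h0 h1 hnee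
    rw [← Faux_sq] at this
    exact (ne_of_lt this) (hfac l)
  -- Hessian entries
  have hessEntry : ∀ i j : Fin (d-1),
      angularHessian (fun z => ∏ l : Fin (d-1), Faux (d-1-(l:ℕ)) (z l)) φ i j
        = (∏ m ∈ Finset.univ.erase i,
            (if m = j then F1aux (d-1-(m:ℕ)) else Faux (d-1-(m:ℕ))) (φ m))
          * (if i = j then F2aux (d-1-(i:ℕ)) else F1aux (d-1-(i:ℕ))) (φ i) := by
    intro i j
    simp only [angularHessian, Matrix.of_apply]
    have hinner : (fun y : Fin (d-1) → ℝ =>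
        fderiv ℝ (fun z => ∏ l : Fin (d-1), Faux (d-1-(l:ℕ)) (z l)) y (Pi.single j 1))
        = fun y => ∏ l : Fin (d-1),
            (if l = j then F1aux (d-1-(l:ℕ)) else Faux (d-1-(l:ℕ))) (y l) := by
      funext y
      rw [fderiv_prod (fun l => Faux (d-1-(l:ℕ))) (fun l => F1aux (d-1-(l:ℕ)))
        (fun l t => hasDerivAt_F _ t) y j]
      rw [← Finset.prod_erase_mul Finset.univ _ (Finset.mem_univ j)]
      congr 1
      · apply Finset.prod_congr rfl
        intro m hm
        rw [if_neg (Finset.mem_erase.mp hm).1]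
      · rw [if_pos rfl]
    rw [hinner]
    rw [fderiv_prod (fun l => if l = j then F1aux (d-1-(l:ℕ)) else Faux (d-1-(l:ℕ)))
      (fun l => if l = j then F2aux (d-1-(l:ℕ)) else F1aux (d-1-(l:ℕ)))
      (fun l t => by
        by_cases hlj : l = j
        · simp only [if_pos hlj]; exact hasDerivAt_F1 _ t
        · simp only [if_neg hlj]; exact hasDerivAt_F _ t) φ i]
  have hdiagEntry : ∀ i : Fin (d-1),
      angularHessian (fun z => ∏ l : Fin (d-1), Faux (d-1-(l:ℕ)) (z l)) φ i i
        = -2*((d:ℝ) - ((i:ℕ):ℝ))/(d:ℝ)^((d:ℝ)/2) := by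
    intro i
    rw [hessEntry i i, if_pos rfl]
    have h1 : (∏ m ∈ Finset.univ.erase i,
        (if m = i then F1aux (d-1-(m:ℕ)) else Faux (d-1-(m:ℕ))) (φ m))
        = ∏ m ∈ Finset.univ.erase i, Faux (d-1-(m:ℕ)) (φ m) :=
      Finset.prod_congr rfl (fun m hm => by rw [if_neg (Finset.mem_erase.mp hm).1])
    rw [h1, F2_eq _ (hκ i) _ (hsin i)]
    rw [show (∏ m ∈ Finset.univ.erase i, Faux (d-1-(m:ℕ)) (φ m))
        * (-2*((((d-1-(i:ℕ)) : ℕ):ℝ) + 1) * Faux (d-1-(i:ℕ)) (φ i))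
        = -2*((((d-1-(i:ℕ)) : ℕ):ℝ) + 1)
          * ((∏ m ∈ Finset.univ.erase i, Faux (d-1-(m:ℕ)) (φ m)) * Faux (d-1-(i:ℕ)) (φ i))
      by ring]
    rw [Finset.prod_erase_mul Finset.univ _ (Finset.mem_univ i), hprod]
    have hi := i.isLt
    have hcast : ((d-1-(i:ℕ) : ℕ):ℝ) + 1 = (d:ℝ) - ((i:ℕ):ℝ) := by
      push_cast [Nat.cast_sub (show (i:ℕ) ≤ d-1 by omega), Nat.cast_sub hd]
      ring
    rw [hcast, show -(d:ℝ)/2 = -((d:ℝ)/2) by ring, Real.rpow_neg hd0.le]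
    ring
  have hoff : ∀ i j : Fin (d-1), i ≠ j →
      angularHessian (fun z => ∏ l : Fin (d-1), Faux (d-1-(l:ℕ)) (z l)) φ i j = 0 := by
    intro i j hij
    rw [hessEntry i j, if_neg hij, F1_zero _ (hκ i) _ (hsin i), mul_zero]
  refine ⟨hdiagEntry, hoff, ?_, ?_⟩
  · -- determinant
    have hdiagM : angularHessian (fun z => ∏ l : Fin (d-1), Faux (d-1-(l:ℕ)) (z l)) φ
        = Matrix.diagonal (fun i : Fin (d-1) => -2*((d:ℝ)-((i:ℕ):ℝ))/(d:ℝ)^((d:ℝ)/2)) := by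
      ext i j
      by_cases h : i = j
      · subst h; rw [Matrix.diagonal_apply_eq]; exact hdiagEntry i
      · rw [Matrix.diagonal_apply_ne _ h]; exact hoff i j h
    rw [hdiagM, Matrix.det_diagonal, Finset.abs_prod]
    have habs : ∀ i : Fin (d-1), |(-2*((d:ℝ)-((i:ℕ):ℝ))/(d:ℝ)^((d:ℝ)/2))|
        = 2*((d:ℝ)-((i:ℕ):ℝ))/(d:ℝ)^((d:ℝ)/2) := by
      intro i
      have hip : ((i:ℕ):ℝ) < (d:ℝ) := by
        have := i.isLt
        exact_mod_cast show (i:ℕ) < d by omega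
      rw [abs_div, abs_of_pos (Real.rpow_pos_of_pos hd0 _),
        abs_of_nonpos (by nlinarith : -2*((d:ℝ)-((i:ℕ):ℝ)) ≤ 0)]
      ring
    rw [Finset.prod_congr rfl (fun i _ => habs i), Finset.prod_div_distrib,
      Finset.prod_mul_distrib, Finset.prod_const, Finset.prod_const,
      Finset.card_univ, Fintype.card_fin]
    have hfact : ∏ i : Fin (d-1), ((d:ℝ) - ((i:ℕ):ℝ)) = (Nat.factorial d : ℝ) := by
      rw [← prod_sub_factorial d hd, Nat.cast_prod]
      apply Finset.prod_congr rfl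
      intro i _
      have := i.isLt
      push_cast [Nat.cast_sub (show (i:ℕ) ≤ d by omega)]
      ring
    rw [hfact]
    have hden : ((d:ℝ)^((d:ℝ)/2))^(d-1) = (d:ℝ)^((d:ℝ)*((d:ℝ)-1)/2) := by
      rw [← Real.rpow_natCast ((d:ℝ)^((d:ℝ)/2)) (d-1), ← Real.rpow_mul hd0.le]
      congr 1
      push_cast [Nat.cast_sub hd]
      ring
    rw [hden]
  · -- positivity
    have h1 : (0:ℝ) < (d:ℝ)^((d:ℝ)*((d:ℝ)-1)/2) := Real.rpow_pos_of_pos hd0 _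
    have h2 : (0:ℝ) < (Nat.factorial d : ℝ) := by exact_mod_cast d.factorial_pos
    positivity
end

section
/- Suppose the common correlation function satisfies r(s,t) = 1 − a|t−s|^α + o(|t−s|^α) as s,t → t₀ with a > 0 and α ∈ (0,2]. Then there exist θ > 0 and a constant C such that for all s, t ∈ [t₀−θ, t₀+θ] ∩ [0,T] and all unit vectors z, z' ∈ S^{d−1}: E[ ( ⟨X̄(t), z⟩ − ⟨X̄(s), z'⟩ )² ] ≤ C·( |s−t|^α + Σ_{i=1}^d |z_i − z'_i|^α ), while E[ ⟨X̄(t), z⟩² ] = 1. -/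
open MeasureTheory ProbabilityTheory Filter Set Real Asymptotics
open scoped ENNReal NNReal Topology RealInnerProductSpace Classical

noncomputable section

/-- The kernel of the Hessian bilinear form of `f` at `e`, restricted to the tangent
space of the unit sphere at `e` (i.e. the orthogonal complement of `e`).  The spherical
Hessian `g''(φ)` of the paper is non-singular iff this kernel is trivial, and has rank
`d-1-m` iff this kernel has dimension `m`. -/
def hessKer {d : ℕ} (f : EuclideanSpace ℝ (Fin d) → ℝ) (e : EuclideanSpace ℝ (Fin d)) :
    Submodule ℝ (EuclideanSpace ℝ (Fin d)) :=
  (Submodule.span ℝ {e})ᗮ ⊓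
    ⨅ w ∈ (Submodule.span ℝ {e})ᗮ, LinearMap.ker (((fderiv ℝ (fderiv ℝ f) e).flip w : EuclideanSpace ℝ (Fin d) →L[ℝ] ℝ) :
      EuclideanSpace ℝ (Fin d) →ₗ[ℝ] ℝ)

/-- Condition 2.1 of the paper: `g` is a non-negative continuous function, positively
homogeneous of order `p`, not identically zero, normalized so that its maximum over the
unit sphere is `1`; the radial extension `x ↦ g(x/‖x‖)` is twice continuously
differentiable on a conic neighbourhood `{g > 1-ε}` of the maximizer set
`M = {e ∈ S^{d-1} : g e = 1}`, and either (i) `m = 0`, `M` is finite and the spherical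
Hessian is non-singular on the neighbourhood, or (ii) `1 ≤ m ≤ d-2` and the spherical
Hessian has rank `d-1-m` (kernel of dimension `m`) on the neighbourhood. -/
structure ChaosCondition (d : ℕ) (p : ℝ) (m : ℕ) (g : EuclideanSpace ℝ (Fin d) → ℝ) : Prop where
  nonneg : ∀ x, 0 ≤ g x
  contin : Continuous g
  homog : ∀ cc : ℝ, 0 < cc → ∀ x, g (cc • x) = cc ^ p * g x
  nontriv : ∃ x, 0 < g x
  normalized : IsGreatest (g '' Metric.sphere 0 1) 1
  structure_cases : ∃ ε, 0 < ε ∧ ε < 1 ∧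
    ContDiffOn ℝ 2 (fun x => g (‖x‖⁻¹ • x)) {x | x ≠ 0 ∧ 1 - ε < g (‖x‖⁻¹ • x)} ∧
    ((m = 0 ∧ {e ∈ Metric.sphere (0 : EuclideanSpace ℝ (Fin d)) 1 | g e = 1}.Finite ∧
        ∀ e ∈ Metric.sphere (0 : EuclideanSpace ℝ (Fin d)) 1, 1 - ε < g e →
          hessKer (fun x => g (‖x‖⁻¹ • x)) e = ⊥) ∨
      (1 ≤ m ∧ m ≤ d - 2 ∧
        ∀ e ∈ Metric.sphere (0 : EuclideanSpace ℝ (Fin d)) 1, 1 - ε < g e →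
          Module.finrank ℝ (hessKer (fun x => g (‖x‖⁻¹ • x)) e) = m))

/-- `X` is a centred `d`-dimensional Gaussian vector process with continuous sample paths,
whose coordinates are independent and identically distributed centred Gaussian processes
with standard deviation function `σ` and correlation function `r`:  every finite linear
combination of coordinate values is a centred Gaussian random variable whose variance is
computed from `Cov(Xᵢ(s), Xᵢ(t)) = σ(s)σ(t)r(s,t)` and the independence of coordinates. -/
def IsGaussianVP {Ω : Type*} [MeasurableSpace Ω] (P : Measure Ω) {d : ℕ}
    (X : ℝ → Ω → EuclideanSpace ℝ (Fin d)) (σ : ℝ → ℝ) (r : ℝ → ℝ → ℝ) : Prop :=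
  (∀ ω, Continuous fun t => X t ω) ∧
  (∀ t i, Measurable fun ω => X t ω i) ∧
  ∀ (n : ℕ) (t : Fin n → ℝ) (cc : Fin d → Fin n → ℝ),
    Measure.map (fun ω => ∑ i, ∑ j, cc i j * X (t j) ω i) P =
      gaussianReal 0
        (∑ i, ∑ j, ∑ j', cc i j * cc i j' * (σ (t j) * σ (t j') * r (t j) (t j'))).toNNReal

/-- `B` is a standard fractional Brownian motion with Hurst index `α/2`, i.e. a centred
Gaussian process with continuous sample paths and covariance
`Cov(B_s, B_t) = (|s|^α + |t|^α - |s-t|^α)/2`. -/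
def IsFBM {Ω : Type*} [MeasurableSpace Ω] (Q : Measure Ω) (α : ℝ) (B : ℝ → Ω → ℝ) : Prop :=
  (∀ ω, Continuous fun t => B t ω) ∧ (∀ t, Measurable (B t)) ∧
  ∀ (n : ℕ) (t : Fin n → ℝ) (cc : Fin n → ℝ),
    Measure.map (fun ω => ∑ j, cc j * B (t j) ω) Q =
      gaussianReal 0
        (∑ j, ∑ j', cc j * cc j' * ((|t j| ^ α + |t j'| ^ α - |t j - t j'| ^ α) / 2)).toNNReal

/-- The generalized Piterbarg functional
`𝒫^f_{α,a}(E) = E[sup_{t∈E} exp(√(2a) B_α(t) - a|t|^α - f(t))]`, expressed through a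
fractional Brownian motion `B` on a probability space `(Ω', Q)`.  With `a = 1` and
`f = 0` it is the Pickands functional `H_α(E) = E[sup_{t∈E} exp(√2 B_α(t) - |t|^α)]`. -/
def piterbargFn {Ω : Type*} [MeasurableSpace Ω] (Q : Measure Ω) (B : ℝ → Ω → ℝ)
    (a α : ℝ) (f : ℝ → ℝ) (E : Set ℝ) : ℝ :=
  ∫ ω, (⨆ t : E, Real.exp (Real.sqrt (2 * a) * B (t : ℝ) ω - a * |(t : ℝ)| ^ α - f (t : ℝ))) ∂Q


section AuxIncrementBound

private lemma integral_sq_exp_neg_aux {b : ℝ} (hb : 0 < b) :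
    ∫ x : ℝ, x ^ 2 * Real.exp (-b * x ^ 2) = (2 * b)⁻¹ * Real.sqrt (π / b) := by
  have hu : ∀ x : ℝ, HasDerivAt (fun x : ℝ => x) 1 x := fun x => hasDerivAt_id x
  have hv : ∀ x : ℝ, HasDerivAt (fun x : ℝ => -(2 * b)⁻¹ * Real.exp (-b * x ^ 2))
      (x * Real.exp (-b * x ^ 2)) x := by
    intro x
    have h1 : HasDerivAt (fun x : ℝ => -b * x ^ 2) (-b * (2 * x)) x := by
      simpa using ((hasDerivAt_pow 2 x).const_mul (-b))
    have h2 := (h1.exp).const_mul (-(2 * b)⁻¹)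
    refine h2.congr_deriv ?_
    have hb0 : (2 * b) ≠ 0 := by positivity
    linear_combination (x * Real.exp (-b * x ^ 2)) * (inv_mul_cancel₀ hb0)
  have hint2 : Integrable (fun x : ℝ => x ^ 2 * Real.exp (-b * x ^ 2)) := by
    have h := integrable_rpow_mul_exp_neg_mul_sq hb (s := 2) (by norm_num)
    exact h.congr (Filter.Eventually.of_forall fun x => by simp [Real.rpow_two])
  have huv' : Integrable ((fun x : ℝ => x) * (fun x : ℝ => x * Real.exp (-b * x ^ 2))) := by
    refine hint2.congr (Filter.Eventually.of_forall fun x => ?_)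
    simp [Pi.mul_apply]; ring
  have hu'v : Integrable ((fun _ : ℝ => (1:ℝ)) *
      (fun x : ℝ => -(2 * b)⁻¹ * Real.exp (-b * x ^ 2))) := by
    refine ((integrable_exp_neg_mul_sq hb).const_mul (-(2 * b)⁻¹)).congr
      (Filter.Eventually.of_forall fun x => ?_)
    simp [Pi.mul_apply]
  have huv : Integrable ((fun x : ℝ => x) *
      (fun x : ℝ => -(2 * b)⁻¹ * Real.exp (-b * x ^ 2))) := by
    refine ((integrable_mul_exp_neg_mul_sq hb).const_mul (-(2 * b)⁻¹)).congr
      (Filter.Eventually.of_forall fun x => ?_)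
    simp [Pi.mul_apply]; ring
  have key := MeasureTheory.integral_mul_deriv_eq_deriv_mul_of_integrable (fun x _ => hu x) (fun x _ => hv x) huv' hu'v huv
  have e1 : ∫ x : ℝ, x * (x * Real.exp (-b * x ^ 2)) = ∫ x : ℝ, x ^ 2 * Real.exp (-b * x ^ 2) := by
    congr 1; funext x; ring
  rw [e1] at key
  rw [key]
  simp only [one_mul]
  rw [integral_const_mul, integral_gaussian]
  ring

private lemma integral_sq_gaussianReal_aux (V : ℝ≥0) :
    ∫ x, x ^ 2 ∂(gaussianReal 0 V) = (V : ℝ) := by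
  rcases eq_or_ne V 0 with rfl | hV
  · simp [gaussianReal_zero_var]
  · have hVpos : 0 < (V : ℝ) := by exact_mod_cast pos_iff_ne_zero.mpr hV
    rw [gaussianReal_of_var_ne_zero 0 hV]
    have hpdf : gaussianPDF 0 V
        = fun x => ((Real.toNNReal (gaussianPDFReal 0 V x) : ℝ≥0) : ℝ≥0∞) := rfl
    rw [hpdf, integral_withDensity_eq_integral_smul
      ((measurable_gaussianPDFReal 0 V).real_toNNReal) (fun x => x ^ 2)]
    have hb : 0 < (2 * (V : ℝ))⁻¹ := by positivity
    have heq : ∀ x : ℝ, (Real.toNNReal (gaussianPDFReal 0 V x) : ℝ) • x ^ 2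
        = (√(2 * π * V))⁻¹ * (x ^ 2 * Real.exp (-(2 * (V : ℝ))⁻¹ * x ^ 2)) := by
      intro x
      rw [smul_eq_mul, Real.coe_toNNReal _ (gaussianPDFReal_nonneg 0 V x)]
      unfold gaussianPDFReal
      rw [sub_zero]
      rw [show -x ^ 2 / (2 * (V:ℝ)) = -(2 * (V : ℝ))⁻¹ * x ^ 2 by field_simp]
      ring
    simp only [NNReal.smul_def, heq]
    rw [integral_const_mul, integral_sq_exp_neg_aux hb]
    have h1 : (2 * (2 * (V : ℝ))⁻¹)⁻¹ = (V : ℝ) := by field_simp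
    have h2 : π / (2 * (V : ℝ))⁻¹ = 2 * π * V := by field_simp
    rw [h1, h2]
    have hs : (0:ℝ) < √(2 * π * V) := Real.sqrt_pos.mpr (by positivity)
    field_simp

private lemma moment_eq_aux {Ω : Type*} [MeasurableSpace Ω] (P : Measure Ω) {d : ℕ}
    (X : ℝ → Ω → EuclideanSpace ℝ (Fin d)) (σ : ℝ → ℝ) (r : ℝ → ℝ → ℝ)
    (hX : IsGaussianVP P X σ r) (n : ℕ) (t : Fin n → ℝ) (cc : Fin d → Fin n → ℝ) :
    ∫ ω, (∑ i, ∑ j, cc i j * X (t j) ω i) ^ 2 ∂P =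
      ((∑ i, ∑ j, ∑ j', cc i j * cc i j' *
        (σ (t j) * σ (t j') * r (t j) (t j'))).toNNReal : ℝ) := by
  have hY : Measurable (fun ω => ∑ i, ∑ j, cc i j * X (t j) ω i) :=
    Finset.measurable_sum _ fun i _ => Finset.measurable_sum _ fun j _ =>
      (hX.2.1 (t j) i).const_mul _
  calc ∫ ω, (∑ i, ∑ j, cc i j * X (t j) ω i) ^ 2 ∂P
      = ∫ x, x ^ 2 ∂(Measure.map (fun ω => ∑ i, ∑ j, cc i j * X (t j) ω i) P) :=
        (integral_map hY.aemeasurable ((measurable_id.pow_const 2).aestronglyMeasurable)).symm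
    _ = _ := by rw [hX.2.2 n t cc, integral_sq_gaussianReal_aux]

private lemma sq_le_four_mul_rpow_aux {α : ℝ} (hα : 0 < α) (hα2 : α ≤ 2) {x : ℝ} (hx : |x| ≤ 2) :
    x ^ 2 ≤ 4 * |x| ^ α := by
  rcases eq_or_lt_of_le (abs_nonneg x) with h0 | h0
  · have hx0 : x = 0 := abs_eq_zero.1 h0.symm
    simp [hx0, Real.zero_rpow hα.ne']
  · have key : |x| ^ (2:ℝ) = |x| ^ α * |x| ^ (2 - α) := by
      rw [← Real.rpow_add h0]; norm_num
    have hxx : x ^ 2 = |x| ^ (2:ℝ) := by rw [Real.rpow_two, sq_abs]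
    rw [hxx, key]
    have h1 : |x| ^ (2 - α) ≤ 2 ^ (2 - α) :=
      Real.rpow_le_rpow (abs_nonneg x) hx (by linarith)
    have h2 : (2:ℝ) ^ (2 - α) ≤ 2 ^ (2:ℝ) :=
      Real.rpow_le_rpow_of_exponent_le (by norm_num) (by linarith)
    have h3 : (2:ℝ) ^ (2:ℝ) = 4 := by rw [Real.rpow_two]; norm_num
    calc |x| ^ α * |x| ^ (2 - α) ≤ |x| ^ α * 4 :=
          mul_le_mul_of_nonneg_left (by linarith) (Real.rpow_nonneg (abs_nonneg x) α)
      _ = 4 * |x| ^ α := mul_comm _ _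

end AuxIncrementBound

set_option maxHeartbeats 1000000

/-- Increment bound in the proof of Theorem 2.1: near `t₀` the standardized field
`(t,z) ↦ ⟨X̄(t),z⟩` has unit variance and its increments satisfy
`E[(⟨X̄(t),z⟩ - ⟨X̄(s),z'⟩)²] ≤ C(|s-t|^α + Σᵢ|zᵢ-z'ᵢ|^α)`. -/
theorem standardized_field_increment_bound
    {Ω : Type*} [MeasurableSpace Ω] (P : Measure Ω) [IsProbabilityMeasure P]
    {d : ℕ} (hd : 1 ≤ d) (T t₀ a α : ℝ) (σ : ℝ → ℝ) (r : ℝ → ℝ → ℝ)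
    (X : ℝ → Ω → EuclideanSpace ℝ (Fin d))
    (hT : 0 < T) (ht₀ : t₀ ∈ Icc 0 T) (ha : 0 < a) (hα : 0 < α) (hα2 : α ≤ 2)
    (hX : IsGaussianVP P X σ r)
    (hσpos : ∀ t ∈ Icc 0 T, 0 < σ t)
    (hras : (fun q : ℝ × ℝ => r q.1 q.2 - (1 - a * |q.1 - q.2| ^ α))
              =o[𝓝 (t₀, t₀)] fun q : ℝ × ℝ => |q.1 - q.2| ^ α) :
    ∃ θ > (0 : ℝ), ∃ C : ℝ,
      ∀ s ∈ Icc 0 T ∩ Icc (t₀ - θ) (t₀ + θ), ∀ t ∈ Icc 0 T ∩ Icc (t₀ - θ) (t₀ + θ),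
        ∀ z z' : Fin d → ℝ, (∑ i, z i ^ 2 = 1) → (∑ i, z' i ^ 2 = 1) →
          (∫ ω, ((∑ i, X t ω i / σ t * z i) - ∑ i, X s ω i / σ s * z' i) ^ 2 ∂P ≤
            C * (|s - t| ^ α + ∑ i, |z i - z' i| ^ α)) ∧
          ∫ ω, (∑ i, X t ω i / σ t * z i) ^ 2 ∂P = 1 := by
  -- extract a uniform neighbourhood from the little-o hypothesis
  obtain ⟨δ, hδ, hball⟩ : ∃ δ > 0, ∀ q : ℝ × ℝ, dist q (t₀, t₀) < δ →
      |r q.1 q.2 - (1 - a * |q.1 - q.2| ^ α)| ≤ a * |q.1 - q.2| ^ α := by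
    have h := (hras.def ha)
    rw [Metric.eventually_nhds_iff] at h
    obtain ⟨δ, hδ, h⟩ := h
    refine ⟨δ, hδ, fun q hq => ?_⟩
    have h2 := h hq
    simpa [Real.norm_eq_abs, abs_of_nonneg (Real.rpow_nonneg (abs_nonneg _) α)] using h2
  refine ⟨δ / 2, by linarith, 4 + 4 * a, ?_⟩
  rintro s ⟨hsT, hsθ⟩ t ⟨htT, htθ⟩ z z' hz hz'
  have key : ∀ u w : ℝ, |u - t₀| ≤ δ / 2 → |w - t₀| ≤ δ / 2 →
      |r u w - (1 - a * |u - w| ^ α)| ≤ a * |u - w| ^ α := by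
    intro u w hu hw
    refine hball (u, w) ?_
    rw [Prod.dist_eq]
    simp only [Real.dist_eq]
    exact max_lt (lt_of_le_of_lt hu (by linarith)) (lt_of_le_of_lt hw (by linarith))
  have hsθ' : |s - t₀| ≤ δ / 2 := abs_le.2 ⟨by linarith [hsθ.1], by linarith [hsθ.2]⟩
  have htθ' : |t - t₀| ≤ δ / 2 := abs_le.2 ⟨by linarith [htθ.1], by linarith [htθ.2]⟩
  have rdiag : ∀ u : ℝ, |u - t₀| ≤ δ / 2 → r u u = 1 := by
    intro u hu
    have h2 := key u u hu hu
    rw [sub_self, abs_zero, Real.zero_rpow hα.ne'] at h2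
    have := abs_nonpos_iff.1 (by linarith [h2] : |r u u - (1 - a * 0)| ≤ 0)
    linarith [this]
  have hrss : r s s = 1 := rdiag s hsθ'
  have hrtt : r t t = 1 := rdiag t htθ'
  have hσs : σ s ≠ 0 := (hσpos s hsT).ne'
  have hσt : σ t ≠ 0 := (hσpos t htT).ne'
  constructor
  · -- increment bound
    set h : ℝ := |s - t| ^ α with hh
    have hh0 : 0 ≤ h := Real.rpow_nonneg (abs_nonneg _) α
    set S : ℝ := ∑ i, z i * z' i with hS
    set Sa : ℝ := ∑ i, |z i - z' i| ^ α with hSa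
    have hSa0 : 0 ≤ Sa := Finset.sum_nonneg fun i _ => Real.rpow_nonneg (abs_nonneg _) α
    have he1 := key s t hsθ' htθ'
    have he2 := key t s htθ' hsθ'
    rw [abs_sub_comm t s] at he2
    have habs1 := abs_le.1 he1
    have habs2 := abs_le.1 he2
    -- the moment computation
    have hm := moment_eq_aux P X σ r hX 2 ![s, t] (fun i => ![-(z' i / σ s), z i / σ t])
    have hfun : (fun ω => ((∑ i, X t ω i / σ t * z i) - ∑ i, X s ω i / σ s * z' i) ^ 2)
        = fun ω => (∑ i, ∑ j, (fun i => ![-(z' i / σ s), z i / σ t]) i j * X (![s, t] j) ω i) ^ 2 := by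
      funext ω
      congr 1
      rw [← Finset.sum_sub_distrib]
      refine Finset.sum_congr rfl fun i _ => ?_
      simp only [Fin.sum_univ_two, Matrix.cons_val_zero, Matrix.cons_val_one, Matrix.head_cons]
      ring
    have hE : (∑ i, ∑ j, ∑ j', (fun i => ![-(z' i / σ s), z i / σ t]) i j *
          (fun i => ![-(z' i / σ s), z i / σ t]) i j' *
          (σ (![s, t] j) * σ (![s, t] j') * r (![s, t] j) (![s, t] j')))
        = 1 + 1 - S * (r s t + r t s) := by
      simp only [Fin.sum_univ_two, Matrix.cons_val_zero, Matrix.cons_val_one, Matrix.head_cons]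
      have hterm : ∀ i : Fin d,
          -(z' i / σ s) * -(z' i / σ s) * (σ s * σ s * r s s) +
            -(z' i / σ s) * (z i / σ t) * (σ s * σ t * r s t) +
            (z i / σ t * -(z' i / σ s) * (σ t * σ s * r t s) +
              z i / σ t * (z i / σ t) * (σ t * σ t * r t t))
          = z' i ^ 2 + z i ^ 2 - z i * z' i * (r s t + r t s) := by
        intro i
        rw [hrss, hrtt]
        field_simp
        ring
      rw [Finset.sum_congr rfl fun i _ => hterm i, Finset.sum_sub_distrib,
        Finset.sum_add_distrib, hz', hz, ← Finset.sum_mul, hS]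
    -- |S| ≤ 1
    have habsS : |S| ≤ 1 := by
      calc |S| ≤ ∑ i, |z i * z' i| := Finset.abs_sum_le_sum_abs _ _
        _ ≤ ∑ i, (z i ^ 2 + z' i ^ 2) / 2 := by
            refine Finset.sum_le_sum fun i _ => ?_
            rw [abs_mul]
            nlinarith [sq_nonneg (|z i| - |z' i|), sq_abs (z i), sq_abs (z' i)]
        _ = 1 := by rw [← Finset.sum_div, Finset.sum_add_distrib, hz, hz']; norm_num
    have hSle := abs_le.1 habsS
    -- |2 - (r s t + r t s)| ≤ 4 a h
    have h2R : |2 - (r s t + r t s)| ≤ 4 * (a * h) :=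
      abs_le.2 ⟨by linarith [habs1.1, habs1.2, habs2.1, habs2.2],
        by linarith [habs1.1, habs1.2, habs2.1, habs2.2]⟩
    -- 2 - 2 S = ∑ (z - z')²  ≤ 4 Sa
    have hzz : ∑ i, (z i - z' i) ^ 2 = 2 - 2 * S := by
      rw [show (fun i => (z i - z' i) ^ 2) = fun i => z i ^ 2 + z' i ^ 2 - 2 * (z i * z' i) from
          funext fun i => by ring]
      rw [Finset.sum_sub_distrib, Finset.sum_add_distrib, hz, hz', ← Finset.mul_sum]
      ring
    have hsum_le : ∑ i, (z i - z' i) ^ 2 ≤ 4 * Sa := by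
      rw [hSa, Finset.mul_sum]
      refine Finset.sum_le_sum fun i _ => ?_
      refine sq_le_four_mul_rpow_aux hα hα2 ?_
      have h1 : z i ^ 2 ≤ 1 := by
        rw [← hz]; exact Finset.single_le_sum (fun j _ => sq_nonneg (z j)) (Finset.mem_univ i)
      have h1' : z' i ^ 2 ≤ 1 := by
        rw [← hz']; exact Finset.single_le_sum (fun j _ => sq_nonneg (z' j)) (Finset.mem_univ i)
      have ha1 : |z i| ≤ 1 := by nlinarith [sq_abs (z i), abs_nonneg (z i)]
      have ha2 : |z' i| ≤ 1 := by nlinarith [sq_abs (z' i), abs_nonneg (z' i)]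
      calc |z i - z' i| ≤ |z i| + |z' i| := abs_sub (z i) (z' i)
        _ ≤ 2 := by linarith
    -- assemble: E ≤ 4 Sa + 4 a h
    have hEle : 1 + 1 - S * (r s t + r t s) ≤ 4 * Sa + 4 * (a * h) := by
      have hcross : S * (2 - (r s t + r t s)) ≤ 4 * (a * h) := by
        calc S * (2 - (r s t + r t s)) ≤ |S * (2 - (r s t + r t s))| := le_abs_self _
          _ = |S| * |2 - (r s t + r t s)| := abs_mul _ _
          _ ≤ 1 * (4 * (a * h)) := mul_le_mul habsS h2R (abs_nonneg _) zero_le_one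
          _ = 4 * (a * h) := one_mul _
      nlinarith [hsum_le, hzz]
    rw [hfun, hm, hE]
    have hRHS0 : 0 ≤ (4 + 4 * a) * (h + Sa) := by positivity
    rw [Real.coe_toNNReal']
    refine max_le ?_ hRHS0
    nlinarith [mul_nonneg ha.le hSa0, mul_nonneg ha.le hh0]
  · -- unit variance
    have hm := moment_eq_aux P X σ r hX 1 (fun _ => t) (fun i _ => z i / σ t)
    have hfun : (fun ω => (∑ i, X t ω i / σ t * z i) ^ 2)
        = fun ω => (∑ i, ∑ _j : Fin 1, (z i / σ t) * X t ω i) ^ 2 := by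
      funext ω
      congr 1
      refine Finset.sum_congr rfl fun i _ => ?_
      rw [Fin.sum_univ_one]
      ring
    have hV : (∑ i, ∑ _j : Fin 1, ∑ _j' : Fin 1,
        (z i / σ t) * (z i / σ t) * (σ t * σ t * r t t)) = 1 := by
      simp only [Fin.sum_univ_one]
      rw [hrtt]
      rw [show (fun i => (z i / σ t) * (z i / σ t) * (σ t * σ t * 1)) = fun i => z i ^ 2 from
          funext fun i => by field_simp]
      exact hz
    rw [hfun, hm]
    rw [hV]
    simp
end
end
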